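/- For every a > 0, b ≥ 0, c ≥ b + 1 and every complex number s with Re(s) > −b/a, the function t ↦ t^{s−1}·ϕ_{a,b,c}(t) is integrable on (0,∞) and ∫_0^∞ t^{s−1}·ϕ_{a,b,c}(t) dt = Γ(a·s + b)/Γ(a·s + c), where Γ is the complex Gamma function. -/

import Mathlib

open MeasureTheory Set

/-- The elementary function
`ϕ_{a,b,c}(t) = t^{b/a} (1 − t^{1/a})^{c−b−1} / (a Γ(c−b))` for `0 < t < 1`,
and `0` for `t ≥ 1`. -/
noncomputable def phi2Elem (a b c : ℝ) : ℝ → ℝ :=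
  fun t => if t < 1 then
    (1 / (a * Real.Gamma (c - b))) * t ^ (b / a) * (1 - t ^ (1 / a)) ^ (c - b - 1)
  else 0

theorem stmt_4 (a b c : ℝ) (ha : 0 < a) (hb : 0 ≤ b) (hc : b + 1 ≤ c) (s : ℂ)
    (hs : -(b / a) < s.re) :
    IntegrableOn (fun t : ℝ => (t : ℂ) ^ (s - 1) * (phi2Elem a b c t : ℂ))
      (Set.Ioi (0 : ℝ)) ∧
    ∫ t in Set.Ioi (0 : ℝ), (t : ℂ) ^ (s - 1) * (phi2Elem a b c t : ℂ)
      = Complex.Gamma (a * s + b) / Complex.Gamma (a * s + c) := by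
  set u : ℂ := (a : ℂ) * s + b with hu_def
  set v : ℂ := (c : ℂ) - b with hv_def
  have hGR : 0 < Real.Gamma (c - b) := Real.Gamma_pos_of_pos (by linarith)
  have hu : 0 < u.re := by
    have : -b < a * s.re := by
      have := (mul_lt_mul_iff_right₀ ha).mpr hs
      rwa [mul_neg, mul_div_cancel₀ _ ha.ne'] at this
    simp only [hu_def, Complex.add_re, Complex.mul_re, Complex.ofReal_re, Complex.ofReal_im,
      zero_mul, sub_zero]
    linarith
  have hv : 0 < v.re := by
    simp only [hv_def, Complex.sub_re, Complex.ofReal_re]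
    linarith
  set g : ℝ → ℂ := fun t : ℝ => (t : ℂ) ^ (s - 1) * (phi2Elem a b c t : ℂ) with hg_def
  set F : ℝ → ℂ := fun x : ℝ => if x < 1 then
      (Real.Gamma (c - b) : ℂ)⁻¹ * ((x : ℂ) ^ (u - 1) * (1 - (x : ℂ)) ^ (v - 1)) else 0
    with hF_def
  -- the key pointwise identity after substitution t = x ^ a
  have hFeq : ∀ x ∈ Ioi (0 : ℝ), (|a| * x ^ (a - 1)) • g (x ^ a) = F x := by
    intro x hx
    have hx0 : (0 : ℝ) < x := hx
    have hxne : (x : ℂ) ≠ 0 := Complex.ofReal_ne_zero.mpr hx0.ne'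
    by_cases hx1 : x < 1
    · have hxa1 : x ^ a < 1 := Real.rpow_lt_one hx0.le hx1 ha
      have h1 : (x ^ a) ^ (b / a) = x ^ b := by
        rw [← Real.rpow_mul hx0.le, mul_div_cancel₀ _ ha.ne']
      have h2 : (x ^ a) ^ (1 / a) = x := by
        rw [← Real.rpow_mul hx0.le, mul_one_div_cancel ha.ne', Real.rpow_one]
      simp only [hg_def, hF_def, phi2Elem, if_pos hx1, if_pos hxa1, h1, h2]
      have e1 : ((x ^ a : ℝ) : ℂ) ^ (s - 1) = (x : ℂ) ^ ((a : ℂ) * (s - 1)) :=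
        (Complex.cpow_mul_ofReal_nonneg hx0.le a (s - 1)).symm
      have e2 : ((x ^ b : ℝ) : ℂ) = (x : ℂ) ^ (b : ℂ) := Complex.ofReal_cpow hx0.le b
      have e3 : (((1 - x) ^ (c - b - 1) : ℝ) : ℂ) = ((1 - x : ℝ) : ℂ) ^ ((c - b - 1 : ℝ) : ℂ) :=
        Complex.ofReal_cpow (by linarith) _
      have e4 : ((x ^ (a - 1) : ℝ) : ℂ) = (x : ℂ) ^ ((a - 1 : ℝ) : ℂ) :=
        Complex.ofReal_cpow hx0.le _
      have key : (x : ℂ) ^ (u - 1) =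
          (x : ℂ) ^ ((a - 1 : ℝ) : ℂ) * ((x : ℂ) ^ ((a : ℂ) * (s - 1)) * (x : ℂ) ^ (b : ℂ)) := by
        rw [← Complex.cpow_add _ _ hxne, ← Complex.cpow_add _ _ hxne]
        congr 1
        push_cast
        ring
      have key2 : (1 - (x : ℂ)) ^ (v - 1) = ((1 - x : ℝ) : ℂ) ^ ((c - b - 1 : ℝ) : ℂ) := by
        congr 1 <;> push_cast <;> ring
      rw [abs_of_pos ha, Complex.real_smul, key, key2]
      push_cast [e1, e2, e3, e4]
      have hane : (a : ℂ) ≠ 0 := Complex.ofReal_ne_zero.mpr ha.ne'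
      have hGne : (Real.Gamma (c - b) : ℂ) ≠ 0 := Complex.ofReal_ne_zero.mpr hGR.ne'
      field_simp
    · have hxa1 : ¬ x ^ a < 1 := by
        have h1 : (1 : ℝ) ^ a ≤ x ^ a := Real.rpow_le_rpow (by norm_num) (not_lt.mp hx1) ha.le
        rw [Real.one_rpow] at h1
        exact not_lt.mpr h1
      simp only [hg_def, hF_def, phi2Elem, if_neg hx1, if_neg hxa1]
      simp
  -- integrability of F on Ioi 0
  have hbeta : IntegrableOn (fun x : ℝ => (x : ℂ) ^ (u - 1) * (1 - (x : ℂ)) ^ (v - 1))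
      (Ioc (0 : ℝ) 1) := by
    have := Complex.betaIntegral_convergent hu hv
    rwa [intervalIntegrable_iff_integrableOn_Ioc_of_le zero_le_one] at this
  have hFint : IntegrableOn F (Ioi (0 : ℝ)) := by
    rw [← Ioo_union_Ici_eq_Ioi (zero_lt_one (α := ℝ))]
    apply IntegrableOn.union
    · refine MeasureTheory.IntegrableOn.congr_fun
        ((hbeta.mono_set Ioo_subset_Ioc_self).const_mul ((Real.Gamma (c - b) : ℂ)⁻¹))
        (fun x hx => ?_) measurableSet_Ioo
      simp only [hF_def, if_pos hx.2]
    · refine MeasureTheory.IntegrableOn.congr_fun (integrableOn_zero)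
        (fun x hx => ?_) measurableSet_Ici
      simp only [hF_def, if_neg (not_lt.mpr (mem_Ici.mp hx)), Pi.zero_apply]
  have hgint : IntegrableOn g (Ioi (0 : ℝ)) := by
    rw [← integrableOn_Ioi_comp_rpow_iff g ha.ne']
    exact hFint.congr_fun (fun x hx => (hFeq x hx).symm) measurableSet_Ioi
  refine ⟨hgint, ?_⟩
  -- compute the integral
  have step1 : ∫ t in Ioi (0 : ℝ), g t = ∫ x in Ioi (0 : ℝ), F x := by
    rw [← MeasureTheory.integral_comp_rpow_Ioi g ha.ne']
    exact setIntegral_congr_fun measurableSet_Ioi hFeq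
  have step2 : ∫ x in Ioi (0 : ℝ), F x
      = (Real.Gamma (c - b) : ℂ)⁻¹ * Complex.betaIntegral u v := by
    rw [← Ioo_union_Ici_eq_Ioi (zero_lt_one (α := ℝ)),
      setIntegral_union ((Iio_disjoint_Ici le_rfl).mono_left Ioo_subset_Iio_self) measurableSet_Ici
        (hFint.mono_set (by rw [← Ioo_union_Ici_eq_Ioi (zero_lt_one (α := ℝ))]; exact subset_union_left))
        (hFint.mono_set (by rw [← Ioo_union_Ici_eq_Ioi (zero_lt_one (α := ℝ))]; exact subset_union_right))]
    have hz : ∫ x in Ici (1 : ℝ), F x = 0 := by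
      rw [setIntegral_congr_fun measurableSet_Ici
        (fun x hx => by simp only [hF_def, if_neg (not_lt.mpr (mem_Ici.mp hx))] : EqOn F (fun _ => (0:ℂ)) (Ici 1))]
      simp
    rw [hz, add_zero]
    rw [setIntegral_congr_fun measurableSet_Ioo
      (fun x hx => by simp only [hF_def, if_pos hx.2] :
        EqOn F (fun x : ℝ => (Real.Gamma (c - b) : ℂ)⁻¹ *
          ((x : ℂ) ^ (u - 1) * (1 - (x : ℂ)) ^ (v - 1))) (Ioo 0 1))]
    rw [MeasureTheory.integral_const_mul]
    congr 1
    rw [Complex.betaIntegral, intervalIntegral.integral_of_le zero_le_one,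
      MeasureTheory.integral_Ioc_eq_integral_Ioo]
  rw [step1, step2]
  have hGG := Complex.Gamma_mul_Gamma_eq_betaIntegral hu hv
  have hvsum : u + v = (a : ℂ) * s + c := by rw [hu_def, hv_def]; ring
  rw [hvsum] at hGG
  have hGne : Complex.Gamma ((a : ℂ) * s + c) ≠ 0 := by
    apply Complex.Gamma_ne_zero_of_re_pos
    have : ((a : ℂ) * s + c).re = u.re + v.re := by
      rw [← hvsum]; simp [Complex.add_re]
    rw [this]; linarith
  have hGv : Complex.Gamma v = (Real.Gamma (c - b) : ℂ) := by
    rw [hv_def, show (c : ℂ) - b = ((c - b : ℝ) : ℂ) by push_cast; ring, Complex.Gamma_ofReal]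
  have hGRne : (Real.Gamma (c - b) : ℂ) ≠ 0 := Complex.ofReal_ne_zero.mpr hGR.ne'
  rw [hGv] at hGG
  field_simp
  linear_combination (-1 : ℂ) * hGG
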